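/- arXiv:0811.0547 — 2 statements merged into one kernel-verified Lean document; each statement's English description precedes it below -/
import Mathlib

section
/- Let M be a complete connected Riemannian manifold and G a subgroup of I(M) all of whose orbits in M are closed. Then for every p ∈ M, the orbit G·p equals the orbit Ḡ·p of the closure Ḡ of G in I(M). -/
open Filter Topology Metric Bornology

/-- Compact-open topology on the isometry group `I(M) = M ≃ᵢ M`. -/
noncomputable instance isomCO {M : Type*} [MetricSpace M] : TopologicalSpace (M ≃ᵢ M) :=
  TopologicalSpace.induced (fun g => (⟨g, g.continuous⟩ : C(M, M))) ContinuousMap.compactOpen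

theorem closed_orbits_eq_closure_orbits {M : Type*} [MetricSpace M] [ProperSpace M]
    [ConnectedSpace M] (G : Subgroup (M ≃ᵢ M))
    (hcl : ∀ p : M, IsClosed ((fun g : M ≃ᵢ M => g p) '' (G : Set (M ≃ᵢ M)))) :
    ∀ p : M, (fun g : M ≃ᵢ M => g p) '' (G : Set (M ≃ᵢ M)) =
      (fun g : M ≃ᵢ M => g p) '' closure (G : Set (M ≃ᵢ M)) := by
  intro p
  have hcont : Continuous (fun g : M ≃ᵢ M => g p) := by
    have h1 : Continuous (fun g : M ≃ᵢ M => (⟨g, g.continuous⟩ : C(M, M))) :=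
      continuous_induced_dom
    have h2 : Continuous (fun f : C(M, M) => f p) := ContinuousEvalConst.continuous_eval_const p
    exact h2.comp h1
  apply Set.Subset.antisymm (Set.image_mono subset_closure)
  calc (fun g : M ≃ᵢ M => g p) '' closure (G : Set (M ≃ᵢ M))
      ⊆ closure ((fun g : M ≃ᵢ M => g p) '' (G : Set (M ≃ᵢ M))) :=
        image_closure_subset_closure_image hcont
    _ = _ := (hcl p).closure_eq
end

section
/- Let M be a complete connected Riemannian manifold and G a subgroup of I(M). The orbits of G are all closed in M if and only if for every p ∈ M the G-orbit of p coincides with the orbit of p under the closure of G in I(M). -/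
open Filter Topology Metric Bornology

lemma isom_eval_continuous {M : Type*} [MetricSpace M] (p : M) :
    Continuous (fun g : M ≃ᵢ M => g p) := by
  have h1 : Continuous (fun g : M ≃ᵢ M => (⟨g, g.continuous⟩ : C(M, M))) :=
    continuous_induced_dom
  have h2 : Continuous fun f : C(M, M) => f p := continuous_eval_const p
  exact h2.comp h1

lemma exists_ultrafilter_lim {M : Type*} [MetricSpace M] [ProperSpace M]
    (U : Ultrafilter ℕ) (k : ℕ → M) (c : M) (C : ℝ)
    (hb : ∀ᶠ n in (U : Filter ℕ), k n ∈ closedBall c C) :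
    ∃ y, Tendsto k ↑U (𝓝 y) := by
  obtain ⟨y, -, hy⟩ := (isCompact_closedBall c C).ultrafilter_le_nhds (U.map k)
    (by simp only [Ultrafilter.coe_map, le_principal_iff, Filter.mem_map]; exact hb)
  exact ⟨y, hy⟩

lemma isom_tendsto_of_pointwise {M : Type*} [MetricSpace M] [ProperSpace M]
    {ι : Type*} {l : Filter ι} (F : ι → M ≃ᵢ M) (e : M ≃ᵢ M)
    (h : ∀ x, Tendsto (fun i => F i x) l (𝓝 (e x))) : Tendsto F l (𝓝 e) := by
  rw [show (𝓝 e) = Filter.comap (fun g : M ≃ᵢ M => (⟨g, g.continuous⟩ : C(M, M)))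
      (𝓝 (⟨e, e.continuous⟩ : C(M, M))) from nhds_induced _ _, tendsto_comap_iff]
  rw [ContinuousMap.isUniformEmbedding_toUniformOnFunIsCompact.toIsUniformInducing.isInducing.tendsto_nhds_iff]
  have covers : ⋃₀ {K : Set M | IsCompact K} = Set.univ :=
    Set.eq_univ_of_forall fun x => ⟨{x}, isCompact_singleton, rfl⟩
  have eqc : ∀ K ∈ {K : Set M | IsCompact K},
      EquicontinuousOn (fun i => ((F i : M → M))) K := fun K _ =>
    (Metric.equicontinuous_of_continuity_modulus id tendsto_id _
      (fun x y i => by simp [(F i).isometry.dist_eq] : ∀ (x y : M) i,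
        dist (F i x) (F i y) ≤ id (dist x y))).equicontinuousOn K
  have := (EquicontinuousOn.tendsto_uniformOnFun_iff_pi
    (fun K hK => hK) covers eqc l (fun x => e x)).mpr (tendsto_pi_nhds.mpr h)
  exact this

theorem closed_orbits_iff_closure_orbit_equivalent {M : Type*} [MetricSpace M] [ProperSpace M]
    [ConnectedSpace M] (G : Subgroup (M ≃ᵢ M)) :
    (∀ p : M, IsClosed ((fun g : M ≃ᵢ M => g p) '' (G : Set (M ≃ᵢ M)))) ↔
      ∀ p : M, (fun g : M ≃ᵢ M => g p) '' (G : Set (M ≃ᵢ M)) =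
        (fun g : M ≃ᵢ M => g p) '' closure (G : Set (M ≃ᵢ M)) := by
  constructor
  · intro h p
    refine Set.Subset.antisymm (Set.image_mono subset_closure) ?_
    calc (fun g : M ≃ᵢ M => g p) '' closure (G : Set (M ≃ᵢ M))
        ⊆ closure ((fun g : M ≃ᵢ M => g p) '' (G : Set (M ≃ᵢ M))) :=
          image_closure_subset_closure_image (isom_eval_continuous p)
      _ = _ := (h p).closure_eq
  · intro h p
    apply isClosed_of_closure_subset
    intro q hq
    obtain ⟨u, hu, hlim⟩ := mem_closure_iff_seq_limit.1 hq
    choose g hg hgp using hu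
    set U : Ultrafilter ℕ := Ultrafilter.of atTop with hUdef
    have hUle : (U : Filter ℕ) ≤ atTop := Ultrafilter.of_le _
    have hq' : Tendsto (fun n => g n p) ↑U (𝓝 q) := by
      have : Tendsto (fun n => g n p) atTop (𝓝 q) := by
        simpa only [hgp] using hlim
      exact this.mono_left hUle
    have hsmall : ∀ᶠ n in (U : Filter ℕ), dist (g n p) q ≤ 1 := by
      filter_upwards [hq' (Metric.closedBall_mem_nhds q one_pos)] with n hn
      exact hn
    -- forward limits
    have hfwd : ∀ x : M, ∃ y, Tendsto (fun n => g n x) ↑U (𝓝 y) := by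
      intro x
      apply exists_ultrafilter_lim U _ q (dist x p + 1)
      filter_upwards [hsmall] with n hn
      calc dist (g n x) q ≤ dist (g n x) (g n p) + dist (g n p) q := dist_triangle _ _ _
        _ = dist x p + dist (g n p) q := by rw [(g n).isometry.dist_eq]
        _ ≤ dist x p + 1 := by linarith
    have hbwd : ∀ x : M, ∃ y, Tendsto (fun n => (g n).symm x) ↑U (𝓝 y) := by
      intro x
      apply exists_ultrafilter_lim U _ p (dist x q + 1)
      filter_upwards [hsmall] with n hn
      have : dist ((g n).symm x) p = dist x (g n p) := by
        conv_lhs => rw [show p = (g n).symm (g n p) from ((g n).symm_apply_apply p).symm]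
        rw [(g n).symm.isometry.dist_eq]
      rw [Metric.mem_closedBall, this]
      calc dist x (g n p) ≤ dist x q + dist q (g n p) := dist_triangle _ _ _
        _ ≤ dist x q + 1 := by rw [dist_comm q]; linarith
    choose gf hgf using hfwd
    choose hf hhf using hbwd
    have hdist : ∀ x y : M, dist (gf x) (gf y) = dist x y := by
      intro x y
      have h1 : Tendsto (fun n => dist (g n x) (g n y)) ↑U (𝓝 (dist (gf x) (gf y))) :=
        (hgf x).dist (hgf y)
      have h2 : (fun n => dist (g n x) (g n y)) = fun _ => dist x y := by
        funext n; exact (g n).isometry.dist_eq x y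
      rw [h2] at h1
      exact (tendsto_nhds_unique h1 tendsto_const_nhds)
    have hleft : ∀ x : M, hf (gf x) = x := by
      intro x
      have h1 : Tendsto (fun n => (g n).symm (gf x)) ↑U (𝓝 (hf (gf x))) := hhf (gf x)
      have h2 : Tendsto (fun n => (g n).symm (gf x)) ↑U (𝓝 x) := by
        rw [tendsto_iff_dist_tendsto_zero]
        have heq : (fun n => dist ((g n).symm (gf x)) x) = fun n => dist (gf x) (g n x) := by
          funext n
          calc dist ((g n).symm (gf x)) x
              = dist ((g n).symm (gf x)) ((g n).symm (g n x)) := by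
                rw [(g n).symm_apply_apply]
            _ = dist (gf x) (g n x) := (g n).symm.isometry.dist_eq _ _
        rw [heq]
        have := (tendsto_iff_dist_tendsto_zero).mp (hgf x)
        simpa only [dist_comm] using this
      exact tendsto_nhds_unique h1 h2
    have hright : ∀ x : M, gf (hf x) = x := by
      intro x
      have h1 : Tendsto (fun n => g n (hf x)) ↑U (𝓝 (gf (hf x))) := hgf (hf x)
      have h2 : Tendsto (fun n => g n (hf x)) ↑U (𝓝 x) := by
        rw [tendsto_iff_dist_tendsto_zero]
        have heq : (fun n => dist (g n (hf x)) x) = fun n => dist (hf x) ((g n).symm x) := by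
          funext n
          calc dist (g n (hf x)) x
              = dist (g n (hf x)) (g n ((g n).symm x)) := by rw [(g n).apply_symm_apply]
            _ = dist (hf x) ((g n).symm x) := (g n).isometry.dist_eq _ _
        rw [heq]
        have := (tendsto_iff_dist_tendsto_zero).mp (hhf x)
        simpa only [dist_comm] using this
      exact tendsto_nhds_unique h1 h2
    let e : M ≃ᵢ M := ⟨⟨gf, hf, hleft, hright⟩, Isometry.of_dist_eq hdist⟩
    have he : e ∈ closure (G : Set (M ≃ᵢ M)) := by
      refine mem_closure_of_tendsto (isom_tendsto_of_pointwise g e fun x => hgf x) ?_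
      exact Eventually.of_forall hg
    have hep : e p = q := tendsto_nhds_unique (hgf p) hq'
    rw [h p]
    exact ⟨e, he, hep⟩
end
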